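/- In the time-dependent pure exchange economy with n agents and m goods over [0,T], assume each u_i satisfies (A1): u_i(t,w) is measurable in t for each w; u_i(t,·) is concave for a.e. t; u_i(t,·) ∈ C¹(ℝ^m_+) for a.e. t; each partial derivative ∂u_i/∂x_i^j is measurable in t and ‖∇u_i(t,w)‖ ≤ C_i‖w‖ + g(t) for all w ∈ ℝ^m_+ and a.e. t, with C_i > 0 and g ∈ L²([0,T],ℝ_+). If (p̄, x̄) ∈ D̃ × ∏_i K̃_i(p̄) is a solution of the quasi-variational inequality: ⟪Σ_{i=1}^{n}(e_i − x̄_i), p − p̄⟫_m + Σ_{i=1}^{n} ⟪−∇u_i(·, x̄_i(·)), y_i − x̄_i⟫_m ≥ 0 for all (p, y) ∈ D̃ × ∏_i K̃_i(p̄), then (p̄, x̄) is a dynamic competitive equilibrium: each x̄_i maximizes 𝒰_i over M_i(p̄), and ∫_0^T Σ_i (x̄_i^j(t) − e_i^j(t)) dt ≤ 0 for every good j. -/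

import Mathlib

/-!
STATEMENT 8: In the time-dependent pure exchange economy, under assumption (A1),
any solution of the quasi-variational inequality (over the price set `D̃` and the
truncated budget sets `K̃_i(p̄)`) is a dynamic competitive equilibrium.

The price set `D̃` is abstracted as a set `Dt` of prices whose members are nonnegative
with components summing to one a.e., and which contains, for each good `j`, the constant
unit price of good `j` (these are the defining properties of `D̃` used here).
-/

open MeasureTheory
open scoped RealInnerProductSpace

noncomputable section

/-- Lebesgue measure restricted to the time interval `[0, T]`. -/
def timeMeasure (T : ℝ) : Measure ℝ := volume.restrict (Set.Icc 0 T)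

/-- The commodity space `L = L²([0,T], ℝ^m)`, with its `L²` (real) inner product
`⟪h, g⟫ = ∫₀ᵀ ⟨h t, g t⟩ dt`. -/
abbrev EcoL (m : ℕ) (T : ℝ) := Lp (EuclideanSpace ℝ (Fin m)) 2 (timeMeasure T)

/-- The ordered cone `C_L = {α ∈ L : αʲ(t) ≥ 0 for a.e. t, for all goods j}`. -/
def CL (m : ℕ) (T : ℝ) : Set (EcoL m T) :=
  {x | ∀ j : Fin m, ∀ᵐ t ∂(timeMeasure T), 0 ≤ x t j}

/-- The budget set `M_i(p) = {x ∈ C_L : ⟪p, x − e_i⟫ ≤ 0}` of an agent with endowment `e`. -/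
def budgetSet (m : ℕ) (T : ℝ) (e p : EcoL m T) : Set (EcoL m T) :=
  {x ∈ CL m T | ⟪p, x - e⟫ ≤ 0}

/-- The truncation set `H = ∏_j H_j`, where
`H_j = {α ∈ L²([0,T],ℝ) : α(t) ≥ 0 a.e., ∫₀ᵀ α(t) dt ≤ r_j}`. -/
def Hset (m : ℕ) (T : ℝ) (r : Fin m → ℝ) : Set (EcoL m T) :=
  {x | ∀ j : Fin m, (∀ᵐ t ∂(timeMeasure T), 0 ≤ x t j) ∧
    ∫ t, x t j ∂(timeMeasure T) ≤ r j}

/-- The truncated budget set `K̃_i(p) = M_i(p) ∩ H`. -/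
def truncBudget (m : ℕ) (T : ℝ) (e : EcoL m T) (r : Fin m → ℝ) (p : EcoL m T) :
    Set (EcoL m T) :=
  budgetSet m T e p ∩ Hset m T r

/-- The mean value utility `𝒰(x) = ∫₀ᵀ u(t, x(t)) dt`. -/
def meanUtility (m : ℕ) (T : ℝ) (u : ℝ → EuclideanSpace ℝ (Fin m) → ℝ) (x : EcoL m T) : ℝ :=
  ∫ t, u t (x t) ∂(timeMeasure T)

/-- Assumption (A1) on a utility function `u`, with gradient (in the second variable) `G`:
`u(t,w)` is measurable in `t` for each `w`; `u(t,·)` is concave on `ℝ^m₊` for a.e. `t`;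
`u(t,·)` is `C¹` on `ℝ^m₊` (with gradient `G(t,·)`) for a.e. `t`; `G(·,w)` is measurable for
each `w`; and the growth condition `‖∇u(t,w)‖ ≤ C‖w‖ + g(t)` holds on `ℝ^m₊` for a.e. `t`,
for some `C > 0` and some nonnegative `g ∈ L²([0,T],ℝ)`. -/
def AssumptionA1 (m : ℕ) (T : ℝ) (u : ℝ → EuclideanSpace ℝ (Fin m) → ℝ)
    (G : ℝ → EuclideanSpace ℝ (Fin m) → EuclideanSpace ℝ (Fin m)) : Prop :=
  (∀ w, Measurable fun t => u t w) ∧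
  (∀ᵐ t ∂(timeMeasure T), ConcaveOn ℝ {w : EuclideanSpace ℝ (Fin m) | ∀ j, 0 ≤ w j} (u t)) ∧
  (∀ᵐ t ∂(timeMeasure T), ∀ w : EuclideanSpace ℝ (Fin m), (∀ j, 0 ≤ w j) →
    HasGradientAt (u t) (G t w) w) ∧
  (∀ w, Measurable fun t => G t w) ∧
  (∃ C > (0:ℝ), ∃ g : ℝ → ℝ, MemLp g 2 (timeMeasure T) ∧
    (∀ᵐ t ∂(timeMeasure T), 0 ≤ g t) ∧
    (∀ᵐ t ∂(timeMeasure T), ∀ w : EuclideanSpace ℝ (Fin m), (∀ j, 0 ≤ w j) →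
      ‖G t w‖ ≤ C * ‖w‖ + g t))

instance (T : ℝ) : IsFiniteMeasure (timeMeasure T) := by
  constructor
  rw [timeMeasure, Measure.restrict_apply_univ]
  exact measure_Icc_lt_top

section Helpers

lemma meas_comp_simple' {E : Type*} [TopologicalSpace E]
    (u : ℝ → E → ℝ) (hu : ∀ w, Measurable fun t => u t w)
    (s : SimpleFunc ℝ E) : Measurable fun t => u t (s t) := by
  classical
  have h : (fun t => u t (s t)) =
      fun t => ∑ c ∈ s.range, Set.indicator (s ⁻¹' {c}) (fun t' => u t' c) t := by
    funext t
    simp only [Set.indicator_apply, Set.mem_preimage, Set.mem_singleton_iff]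
    rw [Finset.sum_ite_eq s.range (s t) (fun c => u t c)]
    simp [SimpleFunc.mem_range_self]
  rw [h]
  exact Finset.measurable_sum _ fun c _ => (hu c).indicator (s.measurableSet_fiber c)

lemma aemeasurable_comp' {E : Type*} [TopologicalSpace E]
    [TopologicalSpace.PseudoMetrizableSpace E] {μ : Measure ℝ}
    (u : ℝ → E → ℝ) (hu : ∀ w, Measurable fun t => u t w)
    {x : ℝ → E} (hx : AEStronglyMeasurable x μ)
    (hc : ∀ᵐ t ∂μ, ContinuousAt (u t) (x t)) :
    AEMeasurable (fun t => u t (x t)) μ := by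
  obtain ⟨g, hgm, hxg⟩ := hx
  have htend := hgm.tendsto_approx
  have hae : ∀ᵐ t ∂μ, Filter.Tendsto (fun n => u t ((hgm.approx n) t)) Filter.atTop
      (nhds (u t (x t))) := by
    filter_upwards [hc, hxg] with t hct hxt
    rw [hxt]
    exact (hxt ▸ hct : ContinuousAt _ (g t)).tendsto.comp (htend t)
  exact aemeasurable_of_tendsto_metrizable_ae Filter.atTop
    (fun n => (meas_comp_simple' u hu (hgm.approx n)).aemeasurable) hae

lemma concave_gradient_ineq {F : Type*} [NormedAddCommGroup F] [InnerProductSpace ℝ F]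
    [CompleteSpace F] {S : Set F} {f : F → ℝ} (hf : ConcaveOn ℝ S f)
    {x y : F} (hx : x ∈ S) (hy : y ∈ S) {v : F} (hg : HasGradientAt f v x) :
    f y ≤ f x + ⟪v, y - x⟫ := by
  set d : ℝ := ⟪v, y - x⟫ with hd
  set h : ℝ → ℝ := fun l => f (x + l • (y - x)) with hh
  have hc : HasDerivAt (fun l : ℝ => x + l • (y - x)) (y - x) 0 := by
    simpa using ((hasDerivAt_id (0:ℝ)).smul_const (y - x)).const_add x
  have hcomp : HasDerivAt h d 0 := by
    have h0 : x + (0:ℝ) • (y - x) = x := by simp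
    have hg' : HasFDerivAt f (InnerProductSpace.toDual ℝ F v) (x + (0:ℝ) • (y - x)) := by
      rw [h0]; exact hg.hasFDerivAt
    have := hg'.comp_hasDerivAt 0 hc
    simpa [hh, hd, InnerProductSpace.toDual_apply_apply, Function.comp_def] using this
  have hslope : Filter.Tendsto (slope h 0) (nhdsWithin 0 (Set.Ioi 0)) (nhds d) :=
    (hasDerivAt_iff_tendsto_slope.1 hcomp).mono_left
      (nhdsWithin_mono _ (fun z hz => ne_of_gt hz))
  have hev : ∀ᶠ l in nhdsWithin 0 (Set.Ioi 0), f y - f x ≤ slope h 0 l := by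
    filter_upwards [Ioc_mem_nhdsGT_of_mem (Set.mem_Ico.2 ⟨le_refl (0:ℝ), zero_lt_one⟩)]
      with l hl
    obtain ⟨hl0, hl1⟩ := hl
    have hcombo : x + l • (y - x) = (1 - l) • x + l • y := by
      rw [smul_sub, sub_smul, one_smul]; abel
    have hcc := hf.2 hx hy (by linarith : (0:ℝ) ≤ 1 - l) (le_of_lt hl0) (by ring)
    have hhl : (1 - l) * f x + l * f y ≤ h l := by
      simpa [hh, hcombo, smul_eq_mul] using hcc
    have h0 : h 0 = f x := by simp [hh]
    rw [slope_def_field, sub_zero, le_div_iff₀ hl0]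
    nlinarith
  have hfin : f y - f x ≤ d := ge_of_tendsto hslope hev
  linarith

lemma tendsto_slope_seq {F : Type*} [NormedAddCommGroup F] [InnerProductSpace ℝ F]
    [CompleteSpace F] {f : F → ℝ} {x v : F} (hg : HasGradientAt f v x) (y : F) :
    Filter.Tendsto (fun k : ℕ => ((k:ℝ)+1) * (f (x + ((k:ℝ)+1)⁻¹ • (y - x)) - f x))
      Filter.atTop (nhds ⟪v, y - x⟫) := by
  set h : ℝ → ℝ := fun l => f (x + l • (y - x)) with hh
  have hc : HasDerivAt (fun l : ℝ => x + l • (y - x)) (y - x) 0 := by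
    simpa using ((hasDerivAt_id (0:ℝ)).smul_const (y - x)).const_add x
  have hcomp : HasDerivAt h ⟪v, y - x⟫ 0 := by
    have h0 : x + (0:ℝ) • (y - x) = x := by simp
    have hg' : HasFDerivAt f (InnerProductSpace.toDual ℝ F v) (x + (0:ℝ) • (y - x)) := by
      rw [h0]; exact hg.hasFDerivAt
    have := hg'.comp_hasDerivAt 0 hc
    simpa [hh, InnerProductSpace.toDual_apply_apply, Function.comp_def] using this
  have hseq : Filter.Tendsto (fun k : ℕ => ((k:ℝ)+1)⁻¹) Filter.atTop
      (nhdsWithin 0 ({0}ᶜ : Set ℝ)) := by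
    apply tendsto_nhdsWithin_of_tendsto_nhds_of_eventually_within
    · exact tendsto_one_div_add_atTop_nhds_zero_nat.congr (by simp [one_div])
    · exact Filter.Eventually.of_forall fun k => by
        simp only [Set.mem_compl_iff, Set.mem_singleton_iff]
        positivity
  have := (hasDerivAt_iff_tendsto_slope.1 hcomp).comp hseq
  refine this.congr fun k => ?_
  have hk : ((k:ℝ)+1)⁻¹ ≠ 0 := by positivity
  simp only [Function.comp, slope_def_field, hh, sub_zero]
  rw [div_eq_inv_mul, inv_inv]
  simp

lemma abs_sub_le_of_grad_bound {F : Type*} [NormedAddCommGroup F] [InnerProductSpace ℝ F]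
    [CompleteSpace F] {S : Set F} (hS : Convex ℝ S) {f : F → ℝ} {Gf : F → F}
    (hdiff : ∀ w ∈ S, HasGradientAt f (Gf w) w) {K : ℝ} (hb : ∀ w ∈ S, ‖Gf w‖ ≤ K)
    {x y : F} (hx : x ∈ S) (hy : y ∈ S) : |f y - f x| ≤ K * ‖y - x‖ := by
  have := Convex.norm_image_sub_le_of_norm_hasFDerivWithin_le
    (f' := fun z => InnerProductSpace.toDual ℝ F (Gf z))
    (fun z hz => ((hdiff z hz).hasFDerivAt).hasFDerivWithinAt)
    (fun z hz => by rw [LinearIsometryEquiv.norm_map]; exact hb z hz) hS hx hy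
  simpa [Real.norm_eq_abs] using this

lemma cone_convex (m : ℕ) : Convex ℝ {w : EuclideanSpace ℝ (Fin m) | ∀ j, 0 ≤ w j} := by
  intro a ha b hb s t hs ht _ j
  have h : (s • a + t • b) j = s * a j + t * b j := rfl
  exact h ▸ add_nonneg (mul_nonneg hs (ha j)) (mul_nonneg ht (hb j))

lemma Lp_coeFn_sum {α E : Type*} [MeasurableSpace α] {μ : Measure α} [NormedAddCommGroup E]
    {p : ENNReal} [Fact (1 ≤ p)] {ι : Type*} (s : Finset ι) (f : ι → Lp E p μ) :
    ⇑(∑ i ∈ s, f i) =ᵐ[μ] fun t => ∑ i ∈ s, f i t := by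
  classical
  induction s using Finset.induction_on with
  | empty => simpa [Pi.zero_def] using Lp.coeFn_zero E p μ
  | insert _ _ hni ih =>
    rename_i a s
    rw [Finset.sum_insert hni]
    filter_upwards [Lp.coeFn_add (f a) (∑ i ∈ s, f i), ih] with t h1 h2
    simp only [Finset.sum_insert hni, h1, Pi.add_apply, h2]

lemma mul_integrable' {α : Type*} [MeasurableSpace α] {μ : Measure α} {f g : α → ℝ}
    (hf : MemLp f 2 μ) (hg : MemLp g 2 μ) : Integrable (fun t => f t * g t) μ := by
  have h := hf.smul (φ := g) hg (r := 1)
  rw [memLp_one_iff_integrable] at h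
  exact h.congr (Filter.Eventually.of_forall fun t => by simp [smul_eq_mul, mul_comm])

lemma psi_aemeasurable {m : ℕ} {μ : Measure ℝ}
    (u : ℝ → EuclideanSpace ℝ (Fin m) → ℝ) (G : ℝ → EuclideanSpace ℝ (Fin m) → EuclideanSpace ℝ (Fin m))
    (hu : ∀ w, Measurable fun t => u t w)
    (hgrad : ∀ᵐ t ∂μ, ∀ w : EuclideanSpace ℝ (Fin m), (∀ j, 0 ≤ w j) →
      HasGradientAt (u t) (G t w) w)
    {x xb : ℝ → EuclideanSpace ℝ (Fin m)}
    (hx : AEStronglyMeasurable x μ) (hxb : AEStronglyMeasurable xb μ)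
    (hxc : ∀ᵐ t ∂μ, ∀ j, 0 ≤ x t j) (hxbc : ∀ᵐ t ∂μ, ∀ j, 0 ≤ xb t j) :
    AEMeasurable (fun t => (⟪G t (xb t), x t - xb t⟫ : ℝ)) μ := by
  have hmk : ∀ k : ℕ, AEMeasurable (fun t =>
      ((k:ℝ)+1) * (u t (xb t + ((k:ℝ)+1)⁻¹ • (x t - xb t)) - u t (xb t))) μ := by
    intro k
    have hpt : AEStronglyMeasurable (fun t => xb t + ((k:ℝ)+1)⁻¹ • (x t - xb t)) μ :=
      hxb.add (by exact (hx.sub hxb).const_smul ((k:ℝ)+1)⁻¹)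
    have hcont1 : ∀ᵐ t ∂μ, ContinuousAt (u t) (xb t + ((k:ℝ)+1)⁻¹ • (x t - xb t)) := by
      filter_upwards [hgrad, hxc, hxbc] with t hgt hxt hxbt
      have hmem : ∀ j, 0 ≤ (xb t + ((k:ℝ)+1)⁻¹ • (x t - xb t)) j := by
        intro j
        have hco : (xb t + ((k:ℝ)+1)⁻¹ • (x t - xb t)) j
            = (1 - ((k:ℝ)+1)⁻¹) * xb t j + ((k:ℝ)+1)⁻¹ * x t j := by
          have : (xb t + ((k:ℝ)+1)⁻¹ • (x t - xb t)) j
              = xb t j + ((k:ℝ)+1)⁻¹ * (x t j - xb t j) := rfl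
          rw [this]; ring
        rw [hco]
        have hk1 : ((k:ℝ)+1)⁻¹ ≤ 1 := by
          rw [inv_le_one_iff₀]; right; linarith [Nat.cast_nonneg (α := ℝ) k]
        have hk0 : (0:ℝ) ≤ ((k:ℝ)+1)⁻¹ := by positivity
        have := hxbt j; have := hxt j
        nlinarith
      exact (hgt _ hmem).hasFDerivAt.differentiableAt.continuousAt
    have hcont2 : ∀ᵐ t ∂μ, ContinuousAt (u t) (xb t) := by
      filter_upwards [hgrad, hxbc] with t hgt hxbt
      exact (hgt _ hxbt).hasFDerivAt.differentiableAt.continuousAt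
    exact (((aemeasurable_comp' u hu hpt hcont1).sub
      (aemeasurable_comp' u hu hxb hcont2)).const_mul _)
  have hten : ∀ᵐ t ∂μ, Filter.Tendsto (fun k : ℕ =>
      ((k:ℝ)+1) * (u t (xb t + ((k:ℝ)+1)⁻¹ • (x t - xb t)) - u t (xb t))) Filter.atTop
      (nhds (⟪G t (xb t), x t - xb t⟫ : ℝ)) := by
    filter_upwards [hgrad, hxc, hxbc] with t hgt hxt hxbt
    have := tendsto_slope_seq (hgt _ hxbt) (x t)
    simpa using this
  exact aemeasurable_of_tendsto_metrizable_ae Filter.atTop hmk hten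

end Helpers

/-- **Lemma (a QVI solution is a dynamic competitive equilibrium).**
Assume each `u i` satisfies (A1) (with gradient `G i`), the endowments `e i` lie in `C_L`,
and `r j > ∫₀ᵀ Σ_i e_iʲ(t) dt` for every good `j`. If `(p̄, x̄) ∈ D̃ × ∏_i K̃_i(p̄)` solves
the quasi-variational inequality
`⟪Σ_i (e_i − x̄_i), p − p̄⟫ + Σ_i ⟪−∇u_i(·, x̄_i(·)), y_i − x̄_i⟫ ≥ 0`
for all `(p, y) ∈ D̃ × ∏_i K̃_i(p̄)`, then `(p̄, x̄)` is a dynamic competitive equilibrium: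
each `x̄_i` maximizes `𝒰_i` over `M_i(p̄)`, and
`∫₀ᵀ Σ_i (x̄_iʲ(t) − e_iʲ(t)) dt ≤ 0` for every good `j`. -/
theorem qvi_solution_is_dynamic_competitive_equilibrium
    (m n : ℕ) (T : ℝ) (hT : 0 < T)
    (u : Fin n → ℝ → EuclideanSpace ℝ (Fin m) → ℝ)
    (G : Fin n → ℝ → EuclideanSpace ℝ (Fin m) → EuclideanSpace ℝ (Fin m))
    (hA1 : ∀ i, AssumptionA1 m T (u i) (G i))
    (e : Fin n → EcoL m T) (he : ∀ i, e i ∈ CL m T)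
    (r : Fin m → ℝ) (hr : ∀ j, ∫ t, (∑ i, e i t j) ∂(timeMeasure T) < r j)
    (Dt : Set (EcoL m T))
    (hDt : ∀ p ∈ Dt, (∀ j, ∀ᵐ t ∂(timeMeasure T), 0 ≤ p t j) ∧
      (∀ᵐ t ∂(timeMeasure T), ∑ j, p t j = 1))
    (hcoord : ∀ j : Fin m, ∃ pj ∈ Dt,
      (pj : ℝ → EuclideanSpace ℝ (Fin m)) =ᵐ[timeMeasure T]
        fun _ => EuclideanSpace.single j (1:ℝ))
    (pbar : EcoL m T) (hpbar : pbar ∈ Dt)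
    (xbar : Fin n → EcoL m T)
    (hxbar : ∀ i, xbar i ∈ truncBudget m T (e i) r pbar)
    (hQVI : ∀ p ∈ Dt, ∀ y : Fin n → EcoL m T,
      (∀ i, y i ∈ truncBudget m T (e i) r pbar) →
      0 ≤ ⟪∑ i, (e i - xbar i), p - pbar⟫ +
        ∑ i, ∫ t, ⟪-(G i t (xbar i t)), y i t - xbar i t⟫ ∂(timeMeasure T)) :
    (∀ i, xbar i ∈ budgetSet m T (e i) pbar ∧
      ∀ x ∈ budgetSet m T (e i) pbar,
        meanUtility m T (u i) x ≤ meanUtility m T (u i) (xbar i)) ∧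
    (∀ j, ∫ t, (∑ i, (xbar i t j - e i t j)) ∂(timeMeasure T) ≤ 0) := by
  classical
  -- basic facts
  have hxCL : ∀ i, xbar i ∈ CL m T := fun i => (hxbar i).1.1
  have hxpos : ∀ i, ∀ᵐ t ∂(timeMeasure T), ∀ j, 0 ≤ xbar i t j :=
    fun i => ae_all_iff.2 fun j => hxCL i j
  have coordInt : ∀ (x : EcoL m T) (j : Fin m),
      Integrable (fun t => x t j) (timeMeasure T) := by
    intro x j
    have h1 : MemLp (x : ℝ → EuclideanSpace ℝ (Fin m)) 1 (timeMeasure T) :=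
      (Lp.memLp x).mono_exponent (by norm_num)
    have hi := memLp_one_iff_integrable.1 h1
    have := (EuclideanSpace.proj (𝕜 := ℝ) j).integrable_comp hi
    simpa using this
  -- Part 2 : market clearing
  have hMC : ∀ j, ∫ t, (∑ i, (xbar i t j - e i t j)) ∂(timeMeasure T) ≤ 0 := by
    intro j
    obtain ⟨pj, hpjD, hpj⟩ := hcoord j
    have hq := hQVI pj hpjD xbar hxbar
    have hz : (∑ i, ∫ t, (⟪-(G i t (xbar i t)), xbar i t - xbar i t⟫ : ℝ)
        ∂(timeMeasure T)) = 0 := by simp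
    rw [hz, add_zero] at hq
    rw [inner_sub_right] at hq
    have hbud : 0 ≤ (⟪∑ i, (e i - xbar i), pbar⟫ : ℝ) := by
      rw [sum_inner]
      refine Finset.sum_nonneg fun i _ => ?_
      have h1 : (⟪pbar, xbar i - e i⟫ : ℝ) ≤ 0 := (hxbar i).1.2
      have h2 : (⟪e i - xbar i, pbar⟫ : ℝ) = -⟪pbar, xbar i - e i⟫ := by
        rw [← neg_sub, inner_neg_left, real_inner_comm]
      linarith
    have hpjval : (⟪∑ i, (e i - xbar i), pj⟫ : ℝ)
        = ∫ t, (∑ i, (e i t j - xbar i t j)) ∂(timeMeasure T) := by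
      rw [MeasureTheory.L2.inner_def]
      apply integral_congr_ae
      filter_upwards [Lp_coeFn_sum Finset.univ (fun i => e i - xbar i), hpj,
        ae_all_iff.2 (fun i : Fin n => Lp.coeFn_sub (e i) (xbar i))] with t h1 h2 h3
      rw [h1, h2, sum_inner]
      refine Finset.sum_congr rfl fun i _ => ?_
      have h4 : (⟪(e i : ℝ → EuclideanSpace ℝ (Fin m)) t - xbar i t,
          EuclideanSpace.single j (1:ℝ)⟫ : ℝ)
          = (1:ℝ) * (((e i : ℝ → EuclideanSpace ℝ (Fin m)) t - xbar i t) j) := by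
        rw [EuclideanSpace.inner_single_right]; rfl
      rw [h3 i, Pi.sub_apply, h4, one_mul]
      rfl
    have h2 : 0 ≤ ∫ t, (∑ i, (e i t j - xbar i t j)) ∂(timeMeasure T) := by
      rw [hpjval] at hq; linarith
    have hneg : (fun t => ∑ i, (xbar i t j - e i t j))
        = fun t => -(∑ i, (e i t j - xbar i t j)) := by
      funext t
      rw [← Finset.sum_neg_distrib]
      exact Finset.sum_congr rfl fun i _ => by ring
    rw [hneg, integral_neg]
    linarith
  -- strict coordinate bound for xbar
  have hxj_lt : ∀ i j, ∫ t, xbar i t j ∂(timeMeasure T) < r j := by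
    intro i j
    have hIx : ∀ k : Fin n, Integrable (fun t => xbar k t j) (timeMeasure T) :=
      fun k => coordInt _ j
    have hIe : ∀ k : Fin n, Integrable (fun t => e k t j) (timeMeasure T) :=
      fun k => coordInt _ j
    have hsub : ∫ t, (∑ k, (xbar k t j - e k t j)) ∂(timeMeasure T)
        = (∑ k, ∫ t, xbar k t j ∂(timeMeasure T))
          - (∑ k, ∫ t, e k t j ∂(timeMeasure T)) := by
      rw [integral_finset_sum (μ := timeMeasure T) Finset.univ
        (f := fun k t => xbar k t j - e k t j) (fun k _ => (hIx k).sub (hIe k)),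
        ← Finset.sum_sub_distrib]
      exact Finset.sum_congr rfl fun k _ => integral_sub (hIx k) (hIe k)
    have h1 : (∑ k, ∫ t, xbar k t j ∂(timeMeasure T))
        ≤ ∑ k, ∫ t, e k t j ∂(timeMeasure T) := by
      have := hMC j; rw [hsub] at this; linarith
    have h2 : ∫ t, xbar i t j ∂(timeMeasure T)
        ≤ ∑ k, ∫ t, xbar k t j ∂(timeMeasure T) :=
      Finset.single_le_sum (f := fun k => ∫ t, xbar k t j ∂(timeMeasure T))
        (fun k _ => integral_nonneg_of_ae (hxCL k j)) (Finset.mem_univ i)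
    have h3 : (∑ k, ∫ t, e k t j ∂(timeMeasure T))
        = ∫ t, (∑ k, e k t j) ∂(timeMeasure T) :=
      (integral_finset_sum _ (fun k _ => hIe k)).symm
    have h4 := hr j
    rw [h3] at h1
    linarith
  -- QVI at p = pbar : gradient inequality on the truncated budget set
  have hKey : ∀ i, ∀ z ∈ truncBudget m T (e i) r pbar,
      ∫ t, (⟪G i t (xbar i t), z t - xbar i t⟫ : ℝ) ∂(timeMeasure T) ≤ 0 := by
    intro i z hz
    have hYmem : ∀ k, Function.update xbar i z k ∈ truncBudget m T (e k) r pbar := by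
      intro k
      by_cases hk : k = i
      · subst hk; rw [Function.update_self]; exact hz
      · rw [Function.update_of_ne hk]; exact hxbar k
    have hq := hQVI pbar hpbar _ hYmem
    have h1 : (⟪∑ i, (e i - xbar i), pbar - pbar⟫ : ℝ) = 0 := by simp
    have h2 : (∑ k, ∫ t, (⟪-(G k t (xbar k t)), Function.update xbar i z k t - xbar k t⟫ : ℝ)
          ∂(timeMeasure T))
        = ∫ t, (⟪-(G i t (xbar i t)), z t - xbar i t⟫ : ℝ) ∂(timeMeasure T) := by
      rw [Finset.sum_eq_single_of_mem i (Finset.mem_univ i)]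
      · rw [Function.update_self]
      · intro k _ hk
        rw [Function.update_of_ne hk]
        simp
    rw [h1, h2, zero_add] at hq
    have h3 : ∫ t, (⟪-(G i t (xbar i t)), z t - xbar i t⟫ : ℝ) ∂(timeMeasure T)
        = - ∫ t, (⟪G i t (xbar i t), z t - xbar i t⟫ : ℝ) ∂(timeMeasure T) := by
      rw [← integral_neg]
      exact integral_congr_ae (Filter.Eventually.of_forall fun t => by
        simp [inner_neg_left])
    rw [h3] at hq
    linarith
  -- extension of the gradient inequality to the whole budget set
  have hKeyM : ∀ i, ∀ x ∈ budgetSet m T (e i) pbar,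
      ∫ t, (⟪G i t (xbar i t), x t - xbar i t⟫ : ℝ) ∂(timeMeasure T) ≤ 0 := by
    intro i x hx
    have hxCLx : ∀ j : Fin m, ∀ᵐ t ∂(timeMeasure T), 0 ≤ x t j := hx.1
    -- choose a small positive lambda
    have hA : ∀ j : Fin m, ∀ᶠ l in nhdsWithin (0:ℝ) (Set.Ioi 0),
        (1 - l) * (∫ t, xbar i t j ∂(timeMeasure T))
          + l * (∫ t, x t j ∂(timeMeasure T)) < r j := by
      intro j
      have hco : Filter.Tendsto (fun l : ℝ =>
          (1 - l) * (∫ t, xbar i t j ∂(timeMeasure T))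
            + l * (∫ t, x t j ∂(timeMeasure T))) (nhdsWithin 0 (Set.Ioi 0))
          (nhds ((1 - 0) * (∫ t, xbar i t j ∂(timeMeasure T))
            + 0 * (∫ t, x t j ∂(timeMeasure T)))) :=
        ((continuous_const.sub continuous_id).mul continuous_const |>.add
          (continuous_id.mul continuous_const)).tendsto 0 |>.mono_left nhdsWithin_le_nhds
      refine hco.eventually_lt_const ?_
      simpa using hxj_lt i j
    have hIoc : ∀ᶠ l in nhdsWithin (0:ℝ) (Set.Ioi 0), l ∈ Set.Ioc (0:ℝ) 1 :=
      Ioc_mem_nhdsGT_of_mem (Set.mem_Ico.2 ⟨le_refl 0, zero_lt_one⟩)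
    obtain ⟨l, ⟨hl0, hl1⟩, hlr⟩ := (hIoc.and (Filter.eventually_all.2 hA)).exists
    set z : EcoL m T := xbar i + l • (x - xbar i) with hzdef
    have hzco : (z : ℝ → EuclideanSpace ℝ (Fin m))
        =ᵐ[timeMeasure T] fun t => xbar i t + l • (x t - xbar i t) := by
      filter_upwards [Lp.coeFn_add (xbar i) (l • (x - xbar i)),
        Lp.coeFn_smul l (x - xbar i), Lp.coeFn_sub x (xbar i)] with t h1 h2 h3
      rw [← hzdef] at h1
      rw [h1, Pi.add_apply, h2, Pi.smul_apply, h3, Pi.sub_apply]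
    have hzcoord : ∀ᵐ t ∂(timeMeasure T), ∀ j : Fin m,
        z t j = (1 - l) * xbar i t j + l * x t j := by
      filter_upwards [hzco] with t ht j
      rw [ht]
      have : (xbar i t + l • (x t - xbar i t)) j
          = xbar i t j + l * (x t j - xbar i t j) := rfl
      rw [this]; ring
    have hzpos : ∀ j : Fin m, ∀ᵐ t ∂(timeMeasure T), 0 ≤ z t j := by
      intro j
      filter_upwards [hzcoord, hxCL i j, hxCLx j] with t h1 h2 h3
      rw [h1 j]
      nlinarith
    have hzmem : z ∈ truncBudget m T (e i) r pbar := by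
      refine ⟨⟨hzpos, ?_⟩, ?_⟩
      · -- budget constraint
        have hid : z - e i = (1 - l) • (xbar i - e i) + l • (x - e i) := by
          rw [hzdef]; module
        rw [hid, inner_add_right, real_inner_smul_right, real_inner_smul_right]
        have hb1 : (⟪pbar, xbar i - e i⟫ : ℝ) ≤ 0 := (hxbar i).1.2
        have hb2 : (⟪pbar, x - e i⟫ : ℝ) ≤ 0 := hx.2
        nlinarith
      · -- truncation constraint
        intro j
        refine ⟨hzpos j, ?_⟩
        have hint : ∫ t, z t j ∂(timeMeasure T)
            = (1 - l) * (∫ t, xbar i t j ∂(timeMeasure T))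
              + l * (∫ t, x t j ∂(timeMeasure T)) := by
          rw [integral_congr_ae (hzcoord.mono fun t ht => ht j),
            integral_add ((coordInt (xbar i) j).const_mul _) ((coordInt x j).const_mul _),
            integral_const_mul, integral_const_mul]
        rw [hint]
        exact le_of_lt (hlr j)
    have hzle := hKey i z hzmem
    have hscale : ∫ t, (⟪G i t (xbar i t), z t - xbar i t⟫ : ℝ) ∂(timeMeasure T)
        = l * ∫ t, (⟪G i t (xbar i t), x t - xbar i t⟫ : ℝ) ∂(timeMeasure T) := by
      rw [← integral_const_mul]
      apply integral_congr_ae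
      filter_upwards [hzco] with t ht
      rw [ht]
      have h5 : xbar i t + l • (x t - xbar i t) - xbar i t = l • (x t - xbar i t) := by
        abel
      rw [h5, real_inner_smul_right]
    rw [hscale] at hzle
    nlinarith
  -- Part 1 : utility maximization
  refine ⟨fun i => ⟨(hxbar i).1, ?_⟩, hMC⟩
  intro x hx
  obtain ⟨humeas, hconc, hgrad, hGmeas, C, hC, g, hgmem, hgpos, hgrow⟩ := hA1 i
  have hxpos_x : ∀ᵐ t ∂(timeMeasure T), ∀ j, 0 ≤ x t j := ae_all_iff.2 fun j => hx.1 j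
  have hxbpos := hxpos i
  have hDint : ∀ (w : EcoL m T), (∀ᵐ t ∂(timeMeasure T), ∀ j, 0 ≤ w t j) →
      Integrable (fun t => u i t (w t) - u i t 0) (timeMeasure T) := by
    intro w hw
    have hmeas1 : AEMeasurable (fun t => u i t (w t)) (timeMeasure T) :=
      aemeasurable_comp' (u i) humeas (Lp.aestronglyMeasurable w)
        (by filter_upwards [hgrad, hw] with t h1 h2
            exact (h1 _ h2).hasFDerivAt.differentiableAt.continuousAt)
    have hmeasD : AEStronglyMeasurable (fun t => u i t (w t) - u i t 0) (timeMeasure T) :=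
      (hmeas1.sub (humeas 0).aemeasurable).aestronglyMeasurable
    have hbound : ∀ᵐ t ∂(timeMeasure T),
        ‖u i t (w t) - u i t 0‖ ≤ (C * ‖w t‖ + g t) * ‖w t‖ := by
      filter_upwards [hgrad, hgrow, hgpos, hw] with t h1 h2 h3 h4
      have hsegcone : ∀ v ∈ segment ℝ (0 : EuclideanSpace ℝ (Fin m)) (w t),
          (∀ j, 0 ≤ v j) ∧ ‖v‖ ≤ ‖(w : ℝ → EuclideanSpace ℝ (Fin m)) t‖ := by
        intro v hv
        obtain ⟨a, b, ha, hb, hab, rfl⟩ := hv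
        constructor
        · intro j
          have h5 : (a • (0:EuclideanSpace ℝ (Fin m)) + b • w t) j = a * 0 + b * w t j := rfl
          rw [h5]
          have := h4 j
          nlinarith
        · rw [smul_zero, zero_add, norm_smul, Real.norm_eq_abs, abs_of_nonneg hb]
          nlinarith [norm_nonneg ((w : ℝ → EuclideanSpace ℝ (Fin m)) t)]
      have hmv := abs_sub_le_of_grad_bound (convex_segment _ _)
        (fun v hv => h1 v (hsegcone v hv).1)
        (K := C * ‖(w : ℝ → EuclideanSpace ℝ (Fin m)) t‖ + g t)
        (fun v hv => by
          have h5 := h2 v (hsegcone v hv).1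
          have h6 := (hsegcone v hv).2
          nlinarith)
        (left_mem_segment ℝ _ _) (right_mem_segment ℝ _ _)
      rw [sub_zero] at hmv
      simpa [Real.norm_eq_abs] using hmv
    have hb1 : MemLp (fun t => C * ‖(w : ℝ → EuclideanSpace ℝ (Fin m)) t‖ + g t) 2
        (timeMeasure T) := (((Lp.memLp w).norm).const_mul C).add hgmem
    exact Integrable.mono' (mul_integrable' hb1 ((Lp.memLp w).norm)) hmeasD hbound
  have hpsiInt : Integrable (fun t => (⟪G i t (xbar i t), x t - xbar i t⟫ : ℝ))
      (timeMeasure T) := by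
    have hmeas := psi_aemeasurable (u i) (G i) humeas hgrad
      (Lp.aestronglyMeasurable x) (Lp.aestronglyMeasurable (xbar i)) hxpos_x hxbpos
    have hbound : ∀ᵐ t ∂(timeMeasure T),
        ‖(⟪G i t (xbar i t), x t - xbar i t⟫ : ℝ)‖
          ≤ (C * ‖(xbar i : ℝ → EuclideanSpace ℝ (Fin m)) t‖ + g t)
            * (‖(x : ℝ → EuclideanSpace ℝ (Fin m)) t‖
              + ‖(xbar i : ℝ → EuclideanSpace ℝ (Fin m)) t‖) := by
      filter_upwards [hgrow, hxbpos] with t h2 h4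
      have h5 : ‖G i t (xbar i t)‖ ≤ C * ‖(xbar i : ℝ → EuclideanSpace ℝ (Fin m)) t‖ + g t :=
        h2 _ h4
      have h6 := abs_real_inner_le_norm (G i t (xbar i t)) (x t - xbar i t)
      have h7 : ‖(x : ℝ → EuclideanSpace ℝ (Fin m)) t - xbar i t‖
          ≤ ‖(x : ℝ → EuclideanSpace ℝ (Fin m)) t‖
            + ‖(xbar i : ℝ → EuclideanSpace ℝ (Fin m)) t‖ := norm_sub_le _ _
      rw [Real.norm_eq_abs]
      exact le_trans h6 (mul_le_mul h5 h7 (norm_nonneg _) (le_trans (norm_nonneg _) h5))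
    have hb1 : MemLp (fun t => C * ‖(xbar i : ℝ → EuclideanSpace ℝ (Fin m)) t‖ + g t) 2
        (timeMeasure T) := (((Lp.memLp (xbar i)).norm).const_mul C).add hgmem
    have hb2 : MemLp (fun t => ‖(x : ℝ → EuclideanSpace ℝ (Fin m)) t‖
        + ‖(xbar i : ℝ → EuclideanSpace ℝ (Fin m)) t‖) 2 (timeMeasure T) :=
      ((Lp.memLp x).norm).add ((Lp.memLp (xbar i)).norm)
    exact Integrable.mono' (mul_integrable' hb1 hb2) hmeas.aestronglyMeasurable hbound
  have hconcpt : ∀ᵐ t ∂(timeMeasure T), u i t (x t) - u i t 0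
      ≤ (u i t (xbar i t) - u i t 0) + ⟪G i t (xbar i t), x t - xbar i t⟫ := by
    filter_upwards [hconc, hgrad, hxpos_x, hxbpos] with t h1 h2 h3 h4
    have := concave_gradient_ineq h1 h4 h3 (h2 _ h4)
    linarith
  have hDle : ∫ t, (u i t (x t) - u i t 0) ∂(timeMeasure T)
      ≤ ∫ t, (u i t (xbar i t) - u i t 0) ∂(timeMeasure T) := by
    have h1 := integral_mono_ae (hDint x hxpos_x)
      ((hDint (xbar i) hxbpos).add hpsiInt) hconcpt
    simp only [Pi.add_apply] at h1
    have h2 := integral_add (hDint (xbar i) hxbpos) hpsiInt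
    rw [h2] at h1
    linarith [hKeyM i x hx]
  by_cases h0 : Integrable (fun t => u i t 0) (timeMeasure T)
  · have hrw : ∀ (w : EcoL m T), (fun t => u i t (w t))
        = fun t => (u i t (w t) - u i t 0) + u i t 0 :=
      fun w => funext fun t => by ring
    simp only [meanUtility]
    rw [hrw x, hrw (xbar i), integral_add (hDint x hxpos_x) h0,
      integral_add (hDint (xbar i) hxbpos) h0]
    linarith
  · have hnint : ∀ (w : EcoL m T), (∀ᵐ t ∂(timeMeasure T), ∀ j, 0 ≤ w t j) →
        ¬ Integrable (fun t => u i t (w t)) (timeMeasure T) := by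
      intro w hw hcon
      apply h0
      exact (hcon.sub (hDint w hw)).congr
        (Filter.Eventually.of_forall fun t => by simp)
    simp only [meanUtility]
    rw [integral_undef (hnint x hxpos_x), integral_undef (hnint (xbar i) hxbpos)]
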